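/- arXiv:1704.00003 — 5 statements merged into one kernel-verified Lean document; each statement's English description precedes it below -/
import Mathlib

section
/- Let f̂₁,…,f̂_n be real-valued random variables and μ₁,…,μ_n real numbers such that for each i, |μ_i| ≤ R_i, |f̂_i| ≤ R_i almost surely (with R_i > 0), and P(|μ_i − f̂_i| > ε_i) ≤ δ_i. Then P( |∏_{i=1}^n μ_i − ∏_{i=1}^n f̂_i| > ε ) ≤ Σ_{i=1}^n δ_i, where ε = (∏_{i=1}^n R_i)·(Σ_{i=1}^n ε_i/R_i). -/
open MeasureTheory ProbabilityTheory

lemma prod_sub_prod_bound : ∀ (n : ℕ) (x y R ε : Fin n → ℝ),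
    (∀ i, 0 < R i) → (∀ i, |x i| ≤ R i) → (∀ i, |y i| ≤ R i) →
    (∀ i, |x i - y i| ≤ ε i) →
    |(∏ i, x i) - ∏ i, y i| ≤ (∏ i, R i) * ∑ i, ε i / R i := by
  intro n
  induction n with
  | zero => intro x y R ε _ _ _ _; simp
  | succ n ih =>
    intro x y R ε hR hx hy h
    have hRpos : 0 ≤ ∏ i, R (Fin.succ i) :=
      Finset.prod_nonneg fun i _ => (hR _).le
    have hY : |∏ i, y (Fin.succ i)| ≤ ∏ i, R (Fin.succ i) := by
      rw [Finset.abs_prod]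
      exact Finset.prod_le_prod (fun i _ => abs_nonneg _) (fun i _ => hy _)
    have hih := ih (fun i => x i.succ) (fun i => y i.succ) (fun i => R i.succ)
      (fun i => ε i.succ) (fun i => hR _) (fun i => hx _) (fun i => hy _) (fun i => h _)
    have hε0 : 0 ≤ ε 0 := (abs_nonneg _).trans (h 0)
    have hsum : 0 ≤ ∑ i, ε (Fin.succ i) / R (Fin.succ i) :=
      Finset.sum_nonneg fun i _ =>
        div_nonneg ((abs_nonneg _).trans (h _)) (hR _).le
    rw [Fin.prod_univ_succ, Fin.prod_univ_succ, Fin.prod_univ_succ, Fin.sum_univ_succ]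
    calc |x 0 * ∏ i, x (Fin.succ i) - y 0 * ∏ i, y (Fin.succ i)|
        ≤ |x 0| * |(∏ i, x (Fin.succ i)) - ∏ i, y (Fin.succ i)|
            + |x 0 - y 0| * |∏ i, y (Fin.succ i)| := by
          have heq : x 0 * ∏ i, x (Fin.succ i) - y 0 * ∏ i, y (Fin.succ i)
              = x 0 * ((∏ i, x (Fin.succ i)) - ∏ i, y (Fin.succ i))
                + (x 0 - y 0) * ∏ i, y (Fin.succ i) := by ring
          rw [heq]
          exact (abs_add_le _ _).trans (by rw [abs_mul, abs_mul])
      _ ≤ R 0 * ((∏ i, R (Fin.succ i)) * ∑ i, ε (Fin.succ i) / R (Fin.succ i))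
            + ε 0 * ∏ i, R (Fin.succ i) := by
          exact add_le_add (mul_le_mul (hx 0) hih (abs_nonneg _) (hR 0).le)
            (mul_le_mul (h 0) hY (abs_nonneg _) hε0)
      _ = (R 0 * ∏ i, R (Fin.succ i))
            * (ε 0 / R 0 + ∑ i, ε (Fin.succ i) / R (Fin.succ i)) := by
          have h0 : R 0 ≠ 0 := (hR 0).ne'
          field_simp
          ring

/-- Chaining lemma for products of bounded estimators: if each `f̂ᵢ` is bounded by `Rᵢ`,
`|μᵢ| ≤ Rᵢ`, and `P(|μᵢ - f̂ᵢ| > εᵢ) ≤ δᵢ`, then the product deviates by more than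
`(∏ Rᵢ)(∑ εᵢ/Rᵢ)` with probability at most `∑ δᵢ`. -/
theorem stmt_1
    {Ω : Type*} [MeasurableSpace Ω] (P : Measure Ω) [IsProbabilityMeasure P]
    (n : ℕ) (f : Fin n → Ω → ℝ) (hfmeas : ∀ i, Measurable (f i))
    (μs : Fin n → ℝ) (R : Fin n → ℝ) (hR : ∀ i, 0 < R i)
    (hμbd : ∀ i, |μs i| ≤ R i)
    (hfbd : ∀ i, ∀ᵐ ω ∂P, |f i ω| ≤ R i)
    (ε : Fin n → ℝ) (δ : Fin n → ℝ)
    (hdev : ∀ i, (P {ω | ε i < |μs i - f i ω|}).toReal ≤ δ i) :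
    (P {ω | (∏ i, R i) * (∑ i, ε i / R i) <
        |(∏ i, μs i) - ∏ i, f i ω|}).toReal ≤ ∑ i, δ i := by
  set A : Fin n → Set Ω := fun i => {ω | ε i < |μs i - f i ω|} with hA
  have hae : {ω | (∏ i, R i) * (∑ i, ε i / R i) <
      |(∏ i, μs i) - ∏ i, f i ω|} ≤ᵐ[P] ⋃ i, A i := by
    filter_upwards [ae_all_iff.2 hfbd] with ω hω hbad
    show ω ∈ ⋃ i, A i
    by_contra hcon
    simp only [Set.mem_iUnion, hA, Set.mem_setOf_eq, not_exists, not_lt] at hcon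
    exact absurd (prod_sub_prod_bound n μs (fun i => f i ω) R ε hR hμbd hω hcon)
      (not_le.2 hbad)
  have h1 : P {ω | (∏ i, R i) * (∑ i, ε i / R i) <
      |(∏ i, μs i) - ∏ i, f i ω|} ≤ ∑ i, P (A i) :=
    (measure_mono_ae hae).trans (measure_iUnion_fintype_le P A)
  have h2 : (∑ i, P (A i)).toReal = ∑ i, (P (A i)).toReal :=
    ENNReal.toReal_sum fun i _ => measure_ne_top P _
  calc (P {ω | (∏ i, R i) * (∑ i, ε i / R i) <
        |(∏ i, μs i) - ∏ i, f i ω|}).toReal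
      ≤ (∑ i, P (A i)).toReal :=
        ENNReal.toReal_mono (by simp [measure_ne_top]) h1
    _ = ∑ i, (P (A i)).toReal := h2
    _ ≤ ∑ i, δ i := Finset.sum_le_sum fun i _ => hdev i
end

section
/- Let z ∈ {0,1}^K be a random vector whose coordinates are independent with z_i ∼ Bernoulli(π_i), where π ∈ (0,1)^K. Then E[z ⊗ z ⊗ z] = π ⊗ π ⊗ π + Sym₃[π ⊗ diag(π − π²)] + diag₃(π − 3π² + 2π³), where Sym₃[π ⊗ D]_{ijk} := π_i D_{jk} + π_j D_{ik} + π_k D_{ij} for a symmetric matrix D. -/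
open MeasureTheory ProbabilityTheory

/-- Third-order moment of the IBP latent binary vector: if the coordinates of
`z ∈ {0,1}^K` are independent Bernoulli(πᵢ) variables, then
`E[z ⊗ z ⊗ z] = π⊗π⊗π + Sym₃[π ⊗ diag(π - π²)] + diag₃(π - 3π² + 2π³)`. -/
theorem stmt_3
    {Ω : Type*} [MeasurableSpace Ω] (P : Measure Ω) [IsProbabilityMeasure P]
    (K : ℕ) (π : Fin K → ℝ) (hπ : ∀ i, π i ∈ Set.Ioo (0 : ℝ) 1)
    (z : Ω → Fin K → ℝ)
    (hzmeas : ∀ i, Measurable (fun ω => z ω i))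
    (hz01 : ∀ ω i, z ω i = 0 ∨ z ω i = 1)
    (hindep : iIndepFun (fun i ω => z ω i) P)
    (hBer : ∀ i, P {ω | z ω i = 1} = ENNReal.ofReal (π i)) :
    ∀ i j k : Fin K,
      ∫ ω, z ω i * z ω j * z ω k ∂P
        = π i * π j * π k
          + (π i * (if j = k then π j - (π j) ^ 2 else 0)
             + π j * (if i = k then π i - (π i) ^ 2 else 0)
             + π k * (if i = j then π i - (π i) ^ 2 else 0))
          + (if i = j ∧ j = k then π i - 3 * (π i) ^ 2 + 2 * (π i) ^ 3 else 0) := by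
  have hsq : ∀ ω i, z ω i * z ω i = z ω i := fun ω i => by
    rcases hz01 ω i with h | h <;> simp [h]
  have hE : ∀ i, ∫ ω, z ω i ∂P = π i := by
    intro i
    have hset : MeasurableSet {ω | z ω i = 1} :=
      (hzmeas i) (measurableSet_singleton 1)
    have heq : (fun ω => z ω i) =
        Set.indicator {ω | z ω i = 1} (fun _ => (1 : ℝ)) := by
      funext ω
      rcases hz01 ω i with h | h <;> simp [Set.indicator, h]
    rw [heq, integral_indicator_const _ hset, measureReal_def, hBer i, smul_eq_mul, mul_one,
      ENNReal.toReal_ofReal (le_of_lt (hπ i).1)]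
  -- pairwise expectation
  have hE2 : ∀ i j : Fin K, i ≠ j → ∫ ω, z ω i * z ω j ∂P = π i * π j := by
    intro i j hij
    have h := (hindep.indepFun hij).integral_mul_eq_mul_integral
      (hzmeas i).aestronglyMeasurable (hzmeas j).aestronglyMeasurable
    simpa [Pi.mul_apply, hE i, hE j] using h
  have hE3 : ∀ i j k : Fin K, i ≠ j → i ≠ k → j ≠ k →
      ∫ ω, z ω i * z ω j * z ω k ∂P = π i * π j * π k := by
    intro i j k hij hik hjk
    have hind := hindep.indepFun_mul_left hzmeas i j k hik hjk
    have h : ∫ ω, (z ω i * z ω j) * z ω k ∂P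
        = (∫ ω, z ω i * z ω j ∂P) * ∫ ω, z ω k ∂P :=
      hind.integral_mul_eq_mul_integral
        ((hzmeas i).mul (hzmeas j)).aestronglyMeasurable
        (hzmeas k).aestronglyMeasurable
    rw [h, hE2 i j hij, hE k]
  intro i j k
  by_cases hij : i = j
  · by_cases hjk : j = k
    · subst hij; subst hjk
      have : (fun ω => z ω i * z ω i * z ω i) = fun ω => z ω i := by
        funext ω; rw [hsq, hsq]
      rw [this, hE i]
      simp only [if_pos rfl, and_self, if_true]
      ring
    · subst hij
      have hik : i ≠ k := hjk
      have : (fun ω => z ω i * z ω i * z ω k) = fun ω => z ω i * z ω k := by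
        funext ω; rw [hsq]
      rw [this, hE2 i k hik]
      simp [hjk, hik]
      ring
  · by_cases hjk : j = k
    · subst hjk
      have : (fun ω => z ω i * z ω j * z ω j) = fun ω => z ω i * z ω j := by
        funext ω; rw [mul_assoc, hsq]
      rw [this, hE2 i j hij]
      simp [hij]
      ring
    · by_cases hik : i = k
      · subst hik
        have : (fun ω => z ω i * z ω j * z ω i) = fun ω => z ω i * z ω j := by
          funext ω
          rw [mul_comm (z ω i) (z ω j), mul_assoc, hsq, mul_comm]
        rw [this, hE2 i j hij]
        simp [hij, hjk]
        ring
      · rw [hE3 i j k hij hik hjk]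
        simp [hij, hjk, hik]
end

section
/- Let z ∈ {0,1}^K be a random vector whose coordinates are independent with z_i ∼ Bernoulli(π_i), where π ∈ (0,1)^K. Set S₁ := π, S₂ := diag(π − π²), S₃ := diag₃(π − 3π² + 2π³). Then E[z ⊗ z ⊗ z ⊗ z] = S₁⊗S₁⊗S₁⊗S₁ + Sym₆[S₂ ⊗ S₁ ⊗ S₁] + Sym₃[S₂ ⊗ S₂] + Sym₄[S₃ ⊗ S₁] + diag₄(π − 7π² + 12π³ − 6π⁴), where Sym₆[S₂⊗S₁⊗S₁]_{ijkl} := Σ over the 6 unordered pairs {a,b} ⊂ {i,j,k,l} of [S₂]_{ab}·[S₁]_c·[S₁]_d (with {c,d} the complementary indices), Sym₃[S₂⊗S₂]_{ijkl} := [S₂]_{ij}[S₂]_{kl} + [S₂]_{ik}[S₂]_{jl} + [S₂]_{il}[S₂]_{jk}, and Sym₄[S₃⊗S₁]_{ijkl} := Σ over the 4 choices of one index receiving S₁ of [S₃]_{abc}[S₁]_d. -/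
open MeasureTheory ProbabilityTheory

/-- Order-2 diagonal tensor `diag(v)` with entries `vₐ` at `(a,a)` and `0` elsewhere. -/
def bdiag2 {K : ℕ} (v : Fin K → ℝ) (a b : Fin K) : ℝ := if a = b then v a else 0

/-- Order-3 diagonal tensor `diag₃(v)`. -/
def bdiag3 {K : ℕ} (v : Fin K → ℝ) (a b c : Fin K) : ℝ := if a = b ∧ b = c then v a else 0

/-- Order-4 diagonal tensor `diag₄(v)`. -/
def bdiag4 {K : ℕ} (v : Fin K → ℝ) (a b c d : Fin K) : ℝ :=
  if a = b ∧ b = c ∧ c = d then v a else 0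

/-- Fourth-order moment of the IBP latent binary vector: with `S₁ = π`,
`S₂ = diag(π - π²)`, `S₃ = diag₃(π - 3π² + 2π³)`,
`E[z⊗z⊗z⊗z] = S₁⊗S₁⊗S₁⊗S₁ + Sym₆[S₂⊗S₁⊗S₁] + Sym₃[S₂⊗S₂] + Sym₄[S₃⊗S₁]
              + diag₄(π - 7π² + 12π³ - 6π⁴)`. -/
theorem stmt_4
    {Ω : Type*} [MeasurableSpace Ω] (P : Measure Ω) [IsProbabilityMeasure P]
    (K : ℕ) (π : Fin K → ℝ) (hπ : ∀ i, π i ∈ Set.Ioo (0 : ℝ) 1)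
    (z : Ω → Fin K → ℝ)
    (hzmeas : ∀ i, Measurable (fun ω => z ω i))
    (hz01 : ∀ ω i, z ω i = 0 ∨ z ω i = 1)
    (hindep : iIndepFun (fun i ω => z ω i) P)
    (hBer : ∀ i, P {ω | z ω i = 1} = ENNReal.ofReal (π i)) :
    ∀ i j k l : Fin K,
      ∫ ω, z ω i * z ω j * z ω k * z ω l ∂P
        = π i * π j * π k * π l
          + (bdiag2 (fun t => π t - (π t) ^ 2) i j * π k * π l
             + bdiag2 (fun t => π t - (π t) ^ 2) i k * π j * π l
             + bdiag2 (fun t => π t - (π t) ^ 2) i l * π j * π k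
             + bdiag2 (fun t => π t - (π t) ^ 2) j k * π i * π l
             + bdiag2 (fun t => π t - (π t) ^ 2) j l * π i * π k
             + bdiag2 (fun t => π t - (π t) ^ 2) k l * π i * π j)
          + (bdiag2 (fun t => π t - (π t) ^ 2) i j * bdiag2 (fun t => π t - (π t) ^ 2) k l
             + bdiag2 (fun t => π t - (π t) ^ 2) i k * bdiag2 (fun t => π t - (π t) ^ 2) j l
             + bdiag2 (fun t => π t - (π t) ^ 2) i l * bdiag2 (fun t => π t - (π t) ^ 2) j k)
          + (bdiag3 (fun t => π t - 3 * (π t) ^ 2 + 2 * (π t) ^ 3) j k l * π i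
             + bdiag3 (fun t => π t - 3 * (π t) ^ 2 + 2 * (π t) ^ 3) i k l * π j
             + bdiag3 (fun t => π t - 3 * (π t) ^ 2 + 2 * (π t) ^ 3) i j l * π k
             + bdiag3 (fun t => π t - 3 * (π t) ^ 2 + 2 * (π t) ^ 3) i j k * π l)
          + bdiag4 (fun t => π t - 7 * (π t) ^ 2 + 12 * (π t) ^ 3 - 6 * (π t) ^ 4) i j k l := by

  classical
  have hsm : ∀ t, AEStronglyMeasurable (fun ω => z ω t) P :=
    fun t => (hzmeas t).aestronglyMeasurable
  have hE1 : ∀ t, ∫ ω, z ω t ∂P = π t := by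
    intro t
    have hset : MeasurableSet {ω | z ω t = 1} := hzmeas t (measurableSet_singleton 1)
    have hrep : (fun ω => z ω t)
        = Set.indicator {ω | z ω t = 1} (fun _ => (1 : ℝ)) := by
      funext ω
      rcases hz01 ω t with h | h
      · rw [h, Set.indicator_of_notMem]
        simp only [Set.mem_setOf_eq, h]
        norm_num
      · rw [h, Set.indicator_of_mem]
        exact h
    calc ∫ ω, z ω t ∂P
        = ∫ ω, Set.indicator {ω | z ω t = 1} (fun _ => (1 : ℝ)) ω ∂P := by rw [← hrep]
      _ = (P {ω | z ω t = 1}).toReal • (1 : ℝ) := integral_indicator_const _ hset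
      _ = π t := by
          rw [hBer t, smul_eq_mul, mul_one, ENNReal.toReal_ofReal (hπ t).1.le]
  have hE2 : ∀ a b : Fin K, a ≠ b → ∫ ω, z ω a * z ω b ∂P = π a * π b := by
    intro a b hab
    have h := IndepFun.integral_mul_eq_mul_integral (hindep.indepFun hab) (hsm a) (hsm b)
    simpa [Pi.mul_apply, hE1] using h
  have hE3 : ∀ a b c : Fin K, a ≠ b → a ≠ c → b ≠ c →
      ∫ ω, z ω a * z ω b * z ω c ∂P = π a * π b * π c := by
    intro a b c hab hac hbc
    have hnot : c ∉ ({a, b} : Finset (Fin K)) := by simp [Ne.symm hac, Ne.symm hbc]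
    have hind := hindep.indepFun_finsetProd_of_notMem hzmeas hnot
    have hp : (∏ j ∈ ({a, b} : Finset (Fin K)), (fun t (ω : Ω) => z ω t) j)
        = fun ω => z ω a * z ω b := by
      rw [Finset.prod_pair hab]
      rfl
    rw [hp] at hind
    have h := IndepFun.integral_mul_eq_mul_integral hind ((hsm a).mul (hsm b)) (hsm c)
    simpa [Pi.mul_apply, hE2 a b hab, hE1] using h
  have hE4 : ∀ a b c d : Fin K, a ≠ b → a ≠ c → a ≠ d → b ≠ c → b ≠ d → c ≠ d →
      ∫ ω, z ω a * z ω b * z ω c * z ω d ∂P = π a * π b * π c * π d := by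
    intro a b c d hab hac had hbc hbd hcd
    have hnot : d ∉ ({a, b, c} : Finset (Fin K)) := by
      simp [Ne.symm had, Ne.symm hbd, Ne.symm hcd]
    have hind := hindep.indepFun_finsetProd_of_notMem hzmeas hnot
    have hp : (∏ j ∈ ({a, b, c} : Finset (Fin K)), (fun t (ω : Ω) => z ω t) j)
        = fun ω => z ω a * z ω b * z ω c := by
      rw [Finset.prod_insert (by simp [hab, hac]), Finset.prod_pair hbc]
      funext ω
      simp [mul_assoc]
    rw [hp] at hind
    have h := IndepFun.integral_mul_eq_mul_integral hind (((hsm a).mul (hsm b)).mul (hsm c)) (hsm d)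
    simpa [Pi.mul_apply, hE3 a b c hab hac hbc, hE1] using h
  intro i j k l
  rcases eq_or_ne i j with rfl | hij
  · rcases eq_or_ne i k with rfl | hik
    · rcases eq_or_ne i l with rfl | hil
      · -- all equal
        have hcol : ∀ ω : Ω, z ω i * z ω i * z ω i * z ω i = z ω i := fun ω => by
          rcases hz01 ω i with h | h <;> simp [h]
        simp only [hcol]
        rw [hE1 i]
        simp [bdiag2, bdiag3, bdiag4]
        ring
      · -- i=j=k ≠ l
        have hcol : ∀ ω : Ω, z ω i * z ω i * z ω i * z ω l = z ω i * z ω l := fun ω => by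
          rcases hz01 ω i with h | h <;> simp [h]
        simp only [hcol]
        rw [hE2 i l hil]
        simp [bdiag2, bdiag3, bdiag4, hil, Ne.symm hil]
        ring
    · rcases eq_or_ne i l with rfl | hil
      · -- i=j=l ≠ k
        have hcol : ∀ ω : Ω, z ω i * z ω i * z ω k * z ω i = z ω i * z ω k := fun ω => by
          rcases hz01 ω i with h | h <;> simp [h, mul_comm]
        simp only [hcol]
        rw [hE2 i k hik]
        simp [bdiag2, bdiag3, bdiag4, hik, Ne.symm hik]
        ring
      · rcases eq_or_ne k l with rfl | hkl
        · -- i=j, k=l, i≠k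
          have hcol : ∀ ω : Ω, z ω i * z ω i * z ω k * z ω k = z ω i * z ω k := fun ω => by
            rcases hz01 ω i with h | h <;> rcases hz01 ω k with h2 | h2 <;> simp [h, h2]
          simp only [hcol]
          rw [hE2 i k hik]
          simp [bdiag2, bdiag3, bdiag4, hik, Ne.symm hik]
          ring
        · -- i=j, all of i,k,l distinct
          have hcol : ∀ ω : Ω, z ω i * z ω i * z ω k * z ω l = z ω i * z ω k * z ω l :=
            fun ω => by rcases hz01 ω i with h | h <;> simp [h]
          simp only [hcol]
          rw [hE3 i k l hik hil hkl]
          simp [bdiag2, bdiag3, bdiag4, hik, hil, hkl, Ne.symm hik, Ne.symm hil, Ne.symm hkl]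
          ring
  · rcases eq_or_ne i k with rfl | hik
    · rcases eq_or_ne i l with rfl | hil
      · -- i=k=l ≠ j
        have hcol : ∀ ω : Ω, z ω i * z ω j * z ω i * z ω i = z ω i * z ω j := fun ω => by
          rcases hz01 ω i with h | h <;> simp [h, mul_comm]
        simp only [hcol]
        rw [hE2 i j hij]
        simp [bdiag2, bdiag3, bdiag4, hij, Ne.symm hij]
        ring
      · rcases eq_or_ne j l with rfl | hjl
        · -- i=k, j=l, i≠j
          have hcol : ∀ ω : Ω, z ω i * z ω j * z ω i * z ω j = z ω i * z ω j := fun ω => by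
            rcases hz01 ω i with h | h <;> rcases hz01 ω j with h2 | h2 <;> simp [h, h2]
          simp only [hcol]
          rw [hE2 i j hij]
          simp [bdiag2, bdiag3, bdiag4, hij, hil, Ne.symm hij, Ne.symm hil]
          ring
        · -- i=k, i,j,l distinct
          have hcol : ∀ ω : Ω, z ω i * z ω j * z ω i * z ω l = z ω i * z ω j * z ω l :=
            fun ω => by rcases hz01 ω i with h | h <;> simp [h, mul_comm, mul_assoc, mul_left_comm]
          simp only [hcol]
          rw [hE3 i j l hij hil hjl]
          simp [bdiag2, bdiag3, bdiag4, hij, hil, hjl, Ne.symm hij, Ne.symm hil, Ne.symm hjl]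
          ring
    · rcases eq_or_ne i l with rfl | hil
      · rcases eq_or_ne j k with rfl | hjk
        · -- i=l, j=k, i≠j
          have hcol : ∀ ω : Ω, z ω i * z ω j * z ω j * z ω i = z ω i * z ω j := fun ω => by
            rcases hz01 ω i with h | h <;> rcases hz01 ω j with h2 | h2 <;> simp [h, h2]
          simp only [hcol]
          rw [hE2 i j hij]
          simp [bdiag2, bdiag3, bdiag4, hij, hik, Ne.symm hij, Ne.symm hik]
          ring
        · -- i=l, i,j,k distinct
          have hcol : ∀ ω : Ω, z ω i * z ω j * z ω k * z ω i = z ω i * z ω j * z ω k :=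
            fun ω => by rcases hz01 ω i with h | h <;> simp [h, mul_comm, mul_assoc, mul_left_comm]
          simp only [hcol]
          rw [hE3 i j k hij hik hjk]
          simp [bdiag2, bdiag3, bdiag4, hij, hik, hjk, Ne.symm hij, Ne.symm hik, Ne.symm hjk]
          ring
      · rcases eq_or_ne j k with rfl | hjk
        · rcases eq_or_ne j l with rfl | hjl
          · -- j=k=l ≠ i
            have hcol : ∀ ω : Ω, z ω i * z ω j * z ω j * z ω j = z ω i * z ω j := fun ω => by
              rcases hz01 ω j with h | h <;> simp [h]
            simp only [hcol]
            rw [hE2 i j hij]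
            simp [bdiag2, bdiag3, bdiag4, hij, Ne.symm hij]
            ring
          · -- j=k, i,j,l distinct
            have hcol : ∀ ω : Ω, z ω i * z ω j * z ω j * z ω l = z ω i * z ω j * z ω l :=
              fun ω => by
                rcases hz01 ω j with h | h <;> simp [h, mul_comm, mul_assoc, mul_left_comm]
            simp only [hcol]
            rw [hE3 i j l hij hil hjl]
            simp [bdiag2, bdiag3, bdiag4, hij, hil, hjl, Ne.symm hij, Ne.symm hil, Ne.symm hjl]
            ring
        · rcases eq_or_ne j l with rfl | hjl
          · -- j=l, i,j,k distinct
            have hcol : ∀ ω : Ω, z ω i * z ω j * z ω k * z ω j = z ω i * z ω j * z ω k :=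
              fun ω => by
                rcases hz01 ω j with h | h <;> simp [h, mul_comm, mul_assoc, mul_left_comm]
            simp only [hcol]
            rw [hE3 i j k hij hik hjk]
            simp [bdiag2, bdiag3, bdiag4, hij, hik, hjk, hil,
              Ne.symm hij, Ne.symm hik, Ne.symm hjk, Ne.symm hil]
            ring
          · rcases eq_or_ne k l with rfl | hkl
            · -- k=l, i,j,k distinct
              have hcol : ∀ ω : Ω, z ω i * z ω j * z ω k * z ω k = z ω i * z ω j * z ω k :=
                fun ω => by
                  rcases hz01 ω k with h | h <;> simp [h, mul_comm, mul_assoc, mul_left_comm]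
              simp only [hcol]
              rw [hE3 i j k hij hik hjk]
              simp [bdiag2, bdiag3, bdiag4, hij, hik, hjk, hil, hjl,
                Ne.symm hij, Ne.symm hik, Ne.symm hjk, Ne.symm hil, Ne.symm hjl]
              ring
            · -- all distinct
              rw [hE4 i j k l hij hik hil hjk hjl hkl]
              simp [bdiag2, bdiag3, bdiag4, hij, hik, hil, hjk, hjl, hkl,
                Ne.symm hij, Ne.symm hik, Ne.symm hil, Ne.symm hjk, Ne.symm hjl, Ne.symm hkl]
end

section
/- In the linear-Gaussian latent feature model x = Φz + ε, with S₁ := E[x] = Φπ and M₂ := E[x ⊗ x], one has M₂ − S₁ ⊗ S₁ − σ²·I_d = Φ·diag(π − π²)·Φᵀ = Σ_{i=1}^K (π_i − π_i²)·φ_i ⊗ φ_i. -/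
open MeasureTheory ProbabilityTheory Matrix Filter Asymptotics
open scoped NNReal ENNReal

section AuxGauss
open Real


lemma aux_tendsto_mul_exp {b : ℝ} (hb : 0 < b) :
    Tendsto (fun x : ℝ => x * rexp (-b * x ^ 2)) atTop (nhds 0) := by
  have h := rpow_mul_exp_neg_mul_sq_isLittleO_exp_neg hb 1
  have h2 : Tendsto (fun x : ℝ => rexp (-(1/2) * x)) atTop (nhds 0) := by
    refine Real.tendsto_exp_atBot.comp ?_
    exact Tendsto.const_mul_atTop_of_neg (by norm_num) tendsto_id
  have h3 := h.trans_tendsto h2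
  simpa [Real.rpow_one] using h3

lemma aux_integral_id_mul_exp {b : ℝ} (hb : 0 < b) :
    ∫ x : ℝ, x * rexp (-b * x ^ 2) = 0 := by
  have h := MeasureTheory.integral_neg_eq_self (fun x : ℝ => x * rexp (-b * x ^ 2)) volume
  simp only [neg_sq, neg_mul] at h ⊢
  rw [MeasureTheory.integral_neg] at h
  linarith

lemma aux_integrable_sq_mul_exp {b : ℝ} (hb : 0 < b) :
    MeasureTheory.Integrable (fun x : ℝ => x ^ 2 * rexp (-b * x ^ 2)) := by
  have h := integrable_rpow_mul_exp_neg_mul_sq hb (s := 2) (by norm_num)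
  have : ∀ x : ℝ, x ^ (2:ℝ) = x ^ (2:ℕ) := fun x => by
    rw [show ((2:ℝ)) = ((2:ℕ):ℝ) by norm_num, Real.rpow_natCast]
  simpa [this] using h

lemma aux_integral_sq_mul_exp {b : ℝ} (hb : 0 < b) :
    ∫ x : ℝ, x ^ 2 * rexp (-b * x ^ 2) = (2 * b)⁻¹ * Real.sqrt (π / b) := by
  set f : ℝ → ℝ := fun x => -(2 * b)⁻¹ * (x * rexp (-b * x ^ 2)) with hf
  have hderiv : ∀ x : ℝ, HasDerivAt f
      (x ^ 2 * rexp (-b * x ^ 2) - (2*b)⁻¹ * rexp (-b * x ^ 2)) x := by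
    intro x
    have h1 : HasDerivAt (fun y : ℝ => -b * y ^ 2) (-b * (2 * x)) x := by
      simpa [mul_comm] using ((hasDerivAt_pow 2 x).const_mul (-b))
    have h2 : HasDerivAt (fun y : ℝ => rexp (-b * y ^ 2))
        (rexp (-b * x ^ 2) * (-b * (2 * x))) x := h1.exp
    have h3 := ((hasDerivAt_id x).mul h2).const_mul (-(2 * b)⁻¹)
    refine h3.congr_deriv ?_
    rw [id]
    have hb' : b ≠ 0 := ne_of_gt hb
    field_simp
    ring
  have hint2 := aux_integrable_sq_mul_exp hb
  have hint1 : MeasureTheory.Integrable (fun x : ℝ => rexp (-b * x ^ 2)) :=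
    integrable_exp_neg_mul_sq hb
  have hf' : MeasureTheory.Integrable
      (fun x : ℝ => x ^ 2 * rexp (-b * x ^ 2) - (2*b)⁻¹ * rexp (-b * x ^ 2)) :=
    hint2.sub (hint1.const_mul _)
  have htop : Tendsto f atTop (nhds 0) := by
    rw [hf]; simpa using (aux_tendsto_mul_exp hb).const_mul (-(2*b)⁻¹)
  have hbot : Tendsto f atBot (nhds 0) := by
    have hg : Tendsto (fun x : ℝ => f (-x)) atTop (nhds 0) := by
      have heq : (fun x : ℝ => f (-x)) = fun x : ℝ => (2*b)⁻¹ * (x * rexp (-b * x ^ 2)) := by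
        funext x; simp only [hf, neg_sq]; ring
      rw [heq]
      simpa using (aux_tendsto_mul_exp hb).const_mul ((2*b)⁻¹)
    have hcomp := hg.comp tendsto_neg_atBot_atTop
    simp only [Function.comp_def, neg_neg] at hcomp
    exact hcomp
  have key := MeasureTheory.integral_of_hasDerivAt_of_tendsto hderiv hf' hbot htop
  rw [MeasureTheory.integral_sub hint2 (hint1.const_mul _), sub_zero,
    MeasureTheory.integral_const_mul, integral_gaussian] at key
  linarith



section GaussMoments

variable {v : ℝ≥0}

lemma aux_gauss_integral_eq (hv : v ≠ 0) (g : ℝ → ℝ) :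
    ∫ x, g x ∂(gaussianReal 0 v) = ∫ x, gaussianPDFReal 0 v x * g x := by
  rw [gaussianReal_of_var_ne_zero 0 hv]
  have hmeas : Measurable fun x => Real.toNNReal (gaussianPDFReal 0 v x) :=
    (measurable_gaussianPDFReal 0 v).real_toNNReal
  have : (gaussianPDF 0 v) = fun x => ((Real.toNNReal (gaussianPDFReal 0 v x) : ℝ≥0) : ℝ≥0∞) :=
    rfl
  rw [this, integral_withDensity_eq_integral_smul hmeas]
  congr 1
  funext x
  rw [NNReal.smul_def, smul_eq_mul, Real.coe_toNNReal _ (gaussianPDFReal_nonneg 0 v x)]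

lemma aux_gauss_integrable_iff (hv : v ≠ 0) (g : ℝ → ℝ) :
    Integrable g (gaussianReal 0 v) ↔
      Integrable (fun x => gaussianPDFReal 0 v x * g x) volume := by
  rw [gaussianReal_of_var_ne_zero 0 hv]
  have hmeas : Measurable fun x => Real.toNNReal (gaussianPDFReal 0 v x) :=
    (measurable_gaussianPDFReal 0 v).real_toNNReal
  have h1 : (gaussianPDF 0 v) = fun x => ((Real.toNNReal (gaussianPDFReal 0 v x) : ℝ≥0) : ℝ≥0∞) :=
    rfl
  rw [h1, integrable_withDensity_iff_integrable_smul hmeas]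
  constructor <;> intro h <;> (refine h.congr ?_) <;> filter_upwards with x <;>
    rw [NNReal.smul_def, smul_eq_mul, Real.coe_toNNReal _ (gaussianPDFReal_nonneg 0 v x)]

lemma aux_pdf_eq (hv : v ≠ 0) :
    gaussianPDFReal 0 v = fun x =>
      (Real.sqrt (2 * π * v))⁻¹ * rexp (-(2 * (v:ℝ))⁻¹ * x ^ 2) := by
  funext x
  have hvpos : (0:ℝ) < v := lt_of_le_of_ne (NNReal.coe_nonneg v) (by exact_mod_cast (Ne.symm hv))
  rw [gaussianPDFReal]
  congr 1
  rw [sub_zero]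
  congr 1
  field_simp

lemma aux_b_pos (hv : v ≠ 0) : (0:ℝ) < (2 * (v:ℝ))⁻¹ := by
  have hvpos : (0:ℝ) < v := lt_of_le_of_ne (NNReal.coe_nonneg v) (by exact_mod_cast (Ne.symm hv))
  positivity

lemma aux_gauss_integrable_id (v : ℝ≥0) :
    Integrable (fun x : ℝ => x) (gaussianReal 0 v) := by
  by_cases hv : v = 0
  · subst hv; rw [gaussianReal_zero_var]; exact (integrable_const _).congr (MeasureTheory.ae_eq_dirac _).symm
  · rw [aux_gauss_integrable_iff hv, aux_pdf_eq hv]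
    have := (integrable_mul_exp_neg_mul_sq (aux_b_pos hv)).const_mul (Real.sqrt (2 * π * v))⁻¹
    refine this.congr ?_
    filter_upwards with x; ring

lemma aux_gauss_integrable_sq (v : ℝ≥0) :
    Integrable (fun x : ℝ => x ^ 2) (gaussianReal 0 v) := by
  by_cases hv : v = 0
  · subst hv; rw [gaussianReal_zero_var]; exact (integrable_const _).congr (MeasureTheory.ae_eq_dirac _).symm
  · rw [aux_gauss_integrable_iff hv, aux_pdf_eq hv]
    have := (aux_integrable_sq_mul_exp (aux_b_pos hv)).const_mul (Real.sqrt (2 * π * v))⁻¹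
    refine this.congr ?_
    filter_upwards with x; ring

lemma aux_gauss_mean (v : ℝ≥0) : ∫ x, x ∂(gaussianReal 0 v) = 0 := by
  by_cases hv : v = 0
  · subst hv; rw [gaussianReal_zero_var, integral_dirac]
  · rw [aux_gauss_integral_eq hv, aux_pdf_eq hv]
    have h : (fun x : ℝ => (Real.sqrt (2 * π * v))⁻¹ * rexp (-(2 * (v:ℝ))⁻¹ * x ^ 2) * x)
        = fun x : ℝ => (Real.sqrt (2 * π * v))⁻¹ * (x * rexp (-(2 * (v:ℝ))⁻¹ * x ^ 2)) := by
      funext x; ring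
    rw [h, MeasureTheory.integral_const_mul, aux_integral_id_mul_exp (aux_b_pos hv), mul_zero]

lemma aux_gauss_second_moment (v : ℝ≥0) : ∫ x, x ^ 2 ∂(gaussianReal 0 v) = v := by
  by_cases hv : v = 0
  · subst hv; rw [gaussianReal_zero_var, integral_dirac]; norm_num
  · have hvpos : (0:ℝ) < v := lt_of_le_of_ne (NNReal.coe_nonneg v) (by exact_mod_cast (Ne.symm hv))
    rw [aux_gauss_integral_eq hv, aux_pdf_eq hv]
    have h : (fun x : ℝ => (Real.sqrt (2 * π * v))⁻¹ * rexp (-(2 * (v:ℝ))⁻¹ * x ^ 2) * x ^ 2)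
        = fun x : ℝ => (Real.sqrt (2 * π * v))⁻¹ * (x ^ 2 * rexp (-(2 * (v:ℝ))⁻¹ * x ^ 2)) := by
      funext x; ring
    rw [h, MeasureTheory.integral_const_mul, aux_integral_sq_mul_exp (aux_b_pos hv)]
    have h1 : (2 * (2 * (v:ℝ))⁻¹)⁻¹ = v := by field_simp
    have h2 : π / (2 * (v:ℝ))⁻¹ = 2 * π * v := by field_simp
    rw [h1, h2]
    have h3 : Real.sqrt (2 * π * v) ≠ 0 := by
      refine ne_of_gt (Real.sqrt_pos.mpr ?_)
      positivity
    field_simp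

end GaussMoments
end AuxGauss

/-- Second-order tensor for the linear-Gaussian latent feature model `x = Φz + ε`:
with `S₁ := E[x] = Φπ` and `M₂ := E[x ⊗ x]`,
`M₂ - S₁ ⊗ S₁ - σ²I = Φ diag(π - π²) Φᵀ = ∑ᵢ (πᵢ - πᵢ²) φᵢ ⊗ φᵢ`. -/
theorem stmt_6
    {Ω : Type*} [MeasurableSpace Ω] (P : Measure Ω) [IsProbabilityMeasure P]
    (d K : ℕ) (Φ : Matrix (Fin d) (Fin K) ℝ)
    (π : Fin K → ℝ) (hπ : ∀ i, π i ∈ Set.Ioo (0 : ℝ) 1)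
    (σ2 : NNReal)
    (z : Ω → Fin K → ℝ) (ε : Ω → Fin d → ℝ)
    (hzmeas : ∀ i, Measurable (fun ω => z ω i))
    (hεmeas : ∀ a, Measurable (fun ω => ε ω a))
    (hz01 : ∀ ω i, z ω i = 0 ∨ z ω i = 1)
    (hindep : iIndepFun
      (Sum.elim (fun i ω => z ω i) (fun a ω => ε ω a) : Fin K ⊕ Fin d → Ω → ℝ) P)
    (hBer : ∀ i, P {ω | z ω i = 1} = ENNReal.ofReal (π i))
    (hGauss : ∀ a, Measure.map (fun ω => ε ω a) P = gaussianReal 0 σ2)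
    (x : Ω → Fin d → ℝ)
    (hx : ∀ ω a, x ω a = (∑ i, Φ a i * z ω i) + ε ω a) :
    (∀ a, ∫ ω, x ω a ∂P = ∑ i, Φ a i * π i)
    ∧
    ((Matrix.of fun a b =>
        (∫ ω, x ω a * x ω b ∂P)
          - (∫ ω, x ω a ∂P) * (∫ ω, x ω b ∂P)
          - (if a = b then (σ2 : ℝ) else 0))
      = Φ * Matrix.diagonal (fun i => π i - (π i) ^ 2) * Φᵀ)
    ∧
    (Φ * Matrix.diagonal (fun i => π i - (π i) ^ 2) * Φᵀ
      = Matrix.of fun a b => ∑ i, (π i - (π i) ^ 2) * Φ a i * Φ b i) := by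
  classical
  -- basic integrability of z
  have hZint : ∀ i, Integrable (fun ω => z ω i) P := by
    intro i
    refine (integrable_const (1:ℝ)).mono' (hzmeas i).aestronglyMeasurable ?_
    filter_upwards with ω
    rcases hz01 ω i with h | h <;> simp [h]
  have hZZint : ∀ i j, Integrable (fun ω => z ω i * z ω j) P := by
    intro i j
    refine (integrable_const (1:ℝ)).mono' ((hzmeas i).mul (hzmeas j)).aestronglyMeasurable ?_
    filter_upwards with ω
    rcases hz01 ω i with h | h <;> rcases hz01 ω j with h' | h' <;> simp [h, h']
  -- mean of z
  have hZval : ∀ i, ∫ ω, z ω i ∂P = π i := by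
    intro i
    have hset : MeasurableSet {ω | z ω i = 1} := (hzmeas i) (measurableSet_singleton 1)
    have heq : (fun ω => z ω i) = Set.indicator {ω | z ω i = 1} 1 := by
      funext ω
      rcases hz01 ω i with h | h <;>
        simp [Set.indicator_apply, Set.mem_setOf_eq, h]
    rw [heq, integral_indicator_one hset, measureReal_def, hBer i, ENNReal.toReal_ofReal (hπ i).1.le]
  -- independence
  have hZZind : ∀ i j, i ≠ j → IndepFun (fun ω => z ω i) (fun ω => z ω j) P := by
    intro i j hij
    exact hindep.indepFun (show (Sum.inl i : Fin K ⊕ Fin d) ≠ Sum.inl j by simpa using hij)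
  have hZEind : ∀ i a, IndepFun (fun ω => z ω i) (fun ω => ε ω a) P := by
    intro i a
    exact hindep.indepFun (show (Sum.inl i : Fin K ⊕ Fin d) ≠ Sum.inr a by simp)
  have hEEind : ∀ a b, a ≠ b → IndepFun (fun ω => ε ω a) (fun ω => ε ω b) P := by
    intro a b hab
    exact hindep.indepFun (show (Sum.inr a : Fin K ⊕ Fin d) ≠ Sum.inr b by simpa using hab)
  -- ε : integrability and moments
  have hEint : ∀ a, Integrable (fun ω => ε ω a) P := by
    intro a
    have h := aux_gauss_integrable_id σ2
    rw [← hGauss a] at h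
    exact (integrable_map_measure aestronglyMeasurable_id (hεmeas a).aemeasurable).mp h
  have hEmean : ∀ a, ∫ ω, ε ω a ∂P = 0 := by
    intro a
    have h := MeasureTheory.integral_map (μ := P) (φ := fun ω => ε ω a) (f := fun x : ℝ => x)
      (hεmeas a).aemeasurable aestronglyMeasurable_id
    rw [hGauss a] at h
    rw [← h, aux_gauss_mean]
  have hEsqint : ∀ a, Integrable (fun ω => ε ω a * ε ω a) P := by
    intro a
    have h := aux_gauss_integrable_sq σ2
    rw [← hGauss a] at h
    have h2 := (integrable_map_measure (measurable_id.pow_const 2).aestronglyMeasurable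
      (hεmeas a).aemeasurable).mp h
    refine h2.congr ?_
    filter_upwards with ω
    simp [Function.comp, pow_two]
  have hEEint : ∀ a b, Integrable (fun ω => ε ω a * ε ω b) P := by
    intro a b
    by_cases hab : a = b
    · subst hab; exact hEsqint a
    · exact (hEEind a b hab).integrable_mul (hEint a) (hEint b)
  have hEEval : ∀ a b, ∫ ω, ε ω a * ε ω b ∂P = if a = b then (σ2:ℝ) else 0 := by
    intro a b
    by_cases hab : a = b
    · subst hab
      rw [if_pos rfl]
      have h := MeasureTheory.integral_map (μ := P) (φ := fun ω => ε ω a) (f := fun x : ℝ => x ^ 2)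
        (hεmeas a).aemeasurable (measurable_id.pow_const 2).aestronglyMeasurable
      rw [hGauss a] at h
      have h2 := aux_gauss_second_moment σ2
      rw [h] at h2
      simp only [pow_two] at h2
      exact h2
    · rw [if_neg hab,
        (hEEind a b hab).integral_fun_mul_eq_mul_integral (hεmeas a).aestronglyMeasurable
          (hεmeas b).aestronglyMeasurable, hEmean a, zero_mul]
  have hZEint : ∀ i a, Integrable (fun ω => z ω i * ε ω a) P := fun i a =>
    (hZEind i a).integrable_mul (hZint i) (hEint a)
  have hZEval : ∀ i a, ∫ ω, z ω i * ε ω a ∂P = 0 := fun i a => by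
    rw [(hZEind i a).integral_fun_mul_eq_mul_integral (hzmeas i).aestronglyMeasurable
      (hεmeas a).aestronglyMeasurable, hEmean a, mul_zero]
  have hZZval : ∀ i j, ∫ ω, z ω i * z ω j ∂P = if i = j then π i else π i * π j := by
    intro i j
    by_cases hij : i = j
    · subst hij
      rw [if_pos rfl]
      have heq : (fun ω => z ω i * z ω i) = fun ω => z ω i := by
        funext ω; rcases hz01 ω i with h | h <;> simp [h]
      rw [heq, hZval i]
    · rw [if_neg hij,
        (hZZind i j hij).integral_fun_mul_eq_mul_integral (hzmeas i).aestronglyMeasurable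
          (hzmeas j).aestronglyMeasurable, hZval i, hZval j]
  -- first conjunct
  have hmean : ∀ a, ∫ ω, x ω a ∂P = ∑ i, Φ a i * π i := by
    intro a
    have heq : (fun ω => x ω a) = fun ω => (∑ i, Φ a i * z ω i) + ε ω a :=
      funext fun ω => hx ω a
    rw [heq, integral_add (integrable_finset_sum _ fun i _ => (hZint i).const_mul _) (hEint a),
      hEmean a, add_zero, integral_finset_sum _ fun i _ => (hZint i).const_mul _]
    exact Finset.sum_congr rfl fun i _ => by rw [integral_const_mul, hZval i]
  -- second moment
  have hM2 : ∀ a b, ∫ ω, x ω a * x ω b ∂P =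
      (∑ i, ∑ j, Φ a i * Φ b j * (if i = j then π i else π i * π j))
        + (if a = b then (σ2:ℝ) else 0) := by
    intro a b
    have expand : (fun ω => x ω a * x ω b) = fun ω =>
        (∑ i, ∑ j, Φ a i * Φ b j * (z ω i * z ω j))
        + ((∑ i, Φ a i * (z ω i * ε ω b)) + ((∑ j, Φ b j * (z ω j * ε ω a)) + ε ω a * ε ω b)) := by
      funext ω
      rw [hx ω a, hx ω b]
      have e1 : (∑ i, Φ a i * z ω i) * (∑ j, Φ b j * z ω j)
          = ∑ i, ∑ j, Φ a i * Φ b j * (z ω i * z ω j) := by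
        rw [Finset.sum_mul_sum]
        exact Finset.sum_congr rfl fun i _ => Finset.sum_congr rfl fun j _ => by ring
      have e2 : (∑ i, Φ a i * z ω i) * ε ω b = ∑ i, Φ a i * (z ω i * ε ω b) := by
        rw [Finset.sum_mul]; exact Finset.sum_congr rfl fun i _ => by ring
      have e3 : ε ω a * (∑ j, Φ b j * z ω j) = ∑ j, Φ b j * (z ω j * ε ω a) := by
        rw [Finset.mul_sum]; exact Finset.sum_congr rfl fun j _ => by ring
      calc (∑ i, Φ a i * z ω i + ε ω a) * (∑ j, Φ b j * z ω j + ε ω b)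
          = (∑ i, Φ a i * z ω i) * (∑ j, Φ b j * z ω j) + ((∑ i, Φ a i * z ω i) * ε ω b
            + (ε ω a * (∑ j, Φ b j * z ω j) + ε ω a * ε ω b)) := by ring
        _ = _ := by rw [e1, e2, e3]
    have I1 : Integrable (fun ω => ∑ i, ∑ j, Φ a i * Φ b j * (z ω i * z ω j)) P :=
      integrable_finset_sum _ fun i _ =>
        integrable_finset_sum _ fun j _ => (hZZint i j).const_mul _
    have I2 : Integrable (fun ω => ∑ i, Φ a i * (z ω i * ε ω b)) P :=
      integrable_finset_sum _ fun i _ => (hZEint i b).const_mul _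
    have I3 : Integrable (fun ω => ∑ j, Φ b j * (z ω j * ε ω a)) P :=
      integrable_finset_sum _ fun j _ => (hZEint j a).const_mul _
    have I4 := hEEint a b
    have I34 : Integrable (fun ω => (∑ j, Φ b j * (z ω j * ε ω a)) + ε ω a * ε ω b) P :=
      I3.add I4
    have I234 : Integrable (fun ω => (∑ i, Φ a i * (z ω i * ε ω b))
        + ((∑ j, Φ b j * (z ω j * ε ω a)) + ε ω a * ε ω b)) P := I2.add I34
    rw [expand, integral_add I1 I234, integral_add I2 I34,
      integral_add I3 I4,
      integral_finset_sum _ (fun i _ =>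
        integrable_finset_sum _ fun j _ => (hZZint i j).const_mul _),
      integral_finset_sum _ (fun i _ => (hZEint i b).const_mul _),
      integral_finset_sum _ (fun j _ => (hZEint j a).const_mul _), hEEval a b]
    have t1 : ∀ i : Fin K, ∫ ω, ∑ j, Φ a i * Φ b j * (z ω i * z ω j) ∂P
        = ∑ j, Φ a i * Φ b j * (if i = j then π i else π i * π j) := by
      intro i
      rw [integral_finset_sum _ fun j _ => (hZZint i j).const_mul _]
      exact Finset.sum_congr rfl fun j _ => by rw [integral_const_mul, hZZval i j]
    have t2 : ∀ i : Fin K, ∫ ω, Φ a i * (z ω i * ε ω b) ∂P = 0 := fun i => by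
      rw [integral_const_mul, hZEval i b, mul_zero]
    have t3 : ∀ j : Fin K, ∫ ω, Φ b j * (z ω j * ε ω a) ∂P = 0 := fun j => by
      rw [integral_const_mul, hZEval j a, mul_zero]
    rw [Finset.sum_congr rfl fun i _ => t1 i, Finset.sum_congr rfl fun i _ => t2 i,
      Finset.sum_congr rfl fun j _ => t3 j]
    simp
  -- third conjunct
  have h3 : Φ * Matrix.diagonal (fun i => π i - (π i) ^ 2) * Φᵀ
      = Matrix.of fun a b => ∑ i, (π i - (π i) ^ 2) * Φ a i * Φ b i := by
    ext a b
    rw [Matrix.mul_apply]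
    simp only [Matrix.mul_diagonal, Matrix.transpose_apply, Matrix.of_apply]
    exact Finset.sum_congr rfl fun j _ => by ring
  refine ⟨hmean, ?_, h3⟩
  rw [h3]
  ext a b
  simp only [Matrix.of_apply]
  rw [hM2 a b, hmean a, hmean b, Finset.sum_mul_sum]
  have harith : ∀ A B t : ℝ, A + t - B - t = A - B := fun A B t => by ring
  rw [harith, ← Finset.sum_sub_distrib]
  refine Finset.sum_congr rfl fun i _ => ?_
  rw [← Finset.sum_sub_distrib]
  have hterm : ∀ j : Fin K, Φ a i * Φ b j * (if i = j then π i else π i * π j)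
      - (Φ a i * π i) * (Φ b j * π j)
      = if i = j then (π i - (π i) ^ 2) * Φ a i * Φ b j else 0 := by
    intro j
    by_cases h : i = j
    · subst h; rw [if_pos rfl, if_pos rfl]; ring
    · rw [if_neg h, if_neg h]; ring
  rw [Finset.sum_congr rfl fun j _ => hterm j, Finset.sum_ite_eq]
  simp
end

section
/- Let Φ ∈ ℝ^{d×K} have linearly independent columns φ₁,…,φ_K, let c₂ ∈ ℝ^K with c₂ᵢ > 0 and c₃ ∈ ℝ^K, and define S₂ := Σ_{i=1}^K c₂ᵢ·φ_i φ_iᵀ and S₃ := Σ_{i=1}^K c₃ᵢ·φ_i^{⊗3}. Let W ∈ ℝ^{d×K} satisfy WᵀS₂W = I_K and suppose the column span of W equals the column span of Φ. Define v_i := √(c₂ᵢ)·Wᵀφ_i. Then: (i) the vectors v₁,…,v_K are orthonormal in ℝ^K; (ii) the whitened tensor T(S₃, W, W, W), whose entries are Σ_{pqr} (S₃)_{pqr} W_{pa}W_{qb}W_{rc}, equals Σ_{i=1}^K c₃ᵢ·c₂ᵢ^{−3/2}·v_i^{⊗3}; and (iii) φ_i = c₂ᵢ^{−1/2}·(W⁺)ᵀ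 v_i for each i, where W⁺ := (WᵀW)^{−1}Wᵀ is the Moore–Penrose pseudoinverse of W. -/
open Matrix

/-- The whitened vector `vᵢ = √(c₂ᵢ) Wᵀφᵢ` associated to the `i`-th latent factor. -/
noncomputable def whitenedVec {d K : ℕ} (Φ W : Matrix (Fin d) (Fin K) ℝ)
    (c₂ : Fin K → ℝ) (i : Fin K) : Fin K → ℝ :=
  fun b => Real.sqrt (c₂ i) * ∑ a, W a b * Φ a i

theorem helper2 {d K : ℕ} (u v : Fin d → ℝ) (c : Fin K → ℝ) (Φ : Matrix (Fin d) (Fin K) ℝ) :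
    ∑ b, (∑ a, u a * ∑ i, c i * Φ a i * Φ b i) * v b
      = ∑ i, c i * (∑ a, u a * Φ a i) * (∑ b, v b * Φ b i) := by
  simp only [Finset.mul_sum, Finset.sum_mul]
  rw [show (∑ b : Fin d, ∑ a : Fin d, ∑ i : Fin K, u a * (c i * Φ a i * Φ b i) * v b)
      = ∑ b : Fin d, ∑ i : Fin K, ∑ a : Fin d, u a * (c i * Φ a i * Φ b i) * v b from
    Finset.sum_congr rfl fun b _ => Finset.sum_comm, Finset.sum_comm]
  exact Finset.sum_congr rfl fun i _ => Finset.sum_congr rfl fun b _ =>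
    Finset.sum_congr rfl fun a _ => by ring

theorem helper3 {d K : ℕ} (u v w : Fin d → ℝ) (t : Fin K → ℝ) (Φ : Matrix (Fin d) (Fin K) ℝ) :
    ∑ a, ∑ b, ∑ c, (∑ i, t i * Φ a i * Φ b i * Φ c i) * u a * v b * w c
      = ∑ i, t i * (∑ a, u a * Φ a i) * (∑ b, v b * Φ b i) * (∑ c, w c * Φ c i) := by
  simp only [Finset.mul_sum, Finset.sum_mul]
  rw [show (∑ a : Fin d, ∑ b : Fin d, ∑ c : Fin d, ∑ i : Fin K,
        t i * Φ a i * Φ b i * Φ c i * u a * v b * w c)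
      = ∑ a : Fin d, ∑ b : Fin d, ∑ i : Fin K, ∑ c : Fin d,
        t i * Φ a i * Φ b i * Φ c i * u a * v b * w c from
    Finset.sum_congr rfl fun a _ => Finset.sum_congr rfl fun b _ => Finset.sum_comm]
  rw [show (∑ a : Fin d, ∑ b : Fin d, ∑ i : Fin K, ∑ c : Fin d,
        t i * Φ a i * Φ b i * Φ c i * u a * v b * w c)
      = ∑ a : Fin d, ∑ i : Fin K, ∑ b : Fin d, ∑ c : Fin d,
        t i * Φ a i * Φ b i * Φ c i * u a * v b * w c from
    Finset.sum_congr rfl fun a _ => Finset.sum_comm]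
  rw [Finset.sum_comm]
  refine Finset.sum_congr rfl fun i _ => ?_
  conv_rhs => rw [Finset.sum_comm]
  conv_rhs => rw [show (∑ y : Fin d, ∑ x : Fin d, ∑ j : Fin d,
        t i * (u j * Φ j i) * (v y * Φ y i) * (w x * Φ x i))
      = ∑ y : Fin d, ∑ j : Fin d, ∑ x : Fin d,
        t i * (u j * Φ j i) * (v y * Φ y i) * (w x * Φ x i) from
    Finset.sum_congr rfl fun y _ => Finset.sum_comm]
  conv_rhs => rw [Finset.sum_comm]
  exact Finset.sum_congr rfl fun a _ => Finset.sum_congr rfl fun b _ =>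
    Finset.sum_congr rfl fun c _ => by ring

/-- Correctness of the whitening and reconstruction step of the spectral algorithms:
if `S₂ = ∑ c₂ᵢ φᵢφᵢᵀ`, `S₃ = ∑ c₃ᵢ φᵢ^{⊗3}`, `WᵀS₂W = I` and `W` has the same column
span as `Φ`, then the `vᵢ = √(c₂ᵢ) Wᵀφᵢ` are orthonormal, the whitened tensor
`T(S₃,W,W,W)` equals `∑ c₃ᵢ c₂ᵢ^{-3/2} vᵢ^{⊗3}`, and `φᵢ = c₂ᵢ^{-1/2} (W⁺)ᵀvᵢ` with
`W⁺ = (WᵀW)⁻¹Wᵀ`. -/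
theorem stmt_19
    (d K : ℕ) (Φ : Matrix (Fin d) (Fin K) ℝ)
    (hΦ : LinearIndependent ℝ (fun i : Fin K => fun a : Fin d => Φ a i))
    (c₂ : Fin K → ℝ) (hc₂ : ∀ i, 0 < c₂ i) (c₃ : Fin K → ℝ)
    (W : Matrix (Fin d) (Fin K) ℝ)
    (hW : Wᵀ * (Matrix.of fun a b => ∑ i, c₂ i * Φ a i * Φ b i) * W = 1)
    (hspan : Submodule.span ℝ (Set.range fun j : Fin K => fun a : Fin d => W a j)
      = Submodule.span ℝ (Set.range fun i : Fin K => fun a : Fin d => Φ a i)) :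
    (∀ i j : Fin K,
      ∑ b, whitenedVec Φ W c₂ i b * whitenedVec Φ W c₂ j b
        = if i = j then 1 else 0)
    ∧
    (∀ p q r : Fin K,
      ∑ a, ∑ b, ∑ c,
          (∑ i, c₃ i * Φ a i * Φ b i * Φ c i) * W a p * W b q * W c r
        = ∑ i, c₃ i * (c₂ i) ^ (-(3 : ℝ) / 2)
            * whitenedVec Φ W c₂ i p * whitenedVec Φ W c₂ i q
            * whitenedVec Φ W c₂ i r)
    ∧
    (∀ i : Fin K, (fun a => Φ a i)
        = fun a => (c₂ i) ^ (-(1 : ℝ) / 2)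
            * ((((Wᵀ * W)⁻¹ * Wᵀ)ᵀ).mulVec (whitenedVec Φ W c₂ i)) a) := by
  classical
  -- the unnormalized whitened vectors
  set m : Fin K → Fin K → ℝ := fun i b => ∑ a, W a b * Φ a i with hm
  -- entrywise form of hW
  have hWent : ∀ p q, (∑ i, c₂ i * m i p * m i q) = if p = q then 1 else 0 := by
    intro p q
    have h := congrFun (congrFun hW p) q
    simp only [Matrix.mul_apply, Matrix.transpose_apply, Matrix.of_apply,
      Matrix.one_apply] at h
    rw [helper2 (fun a => W a p) (fun b => W b q) c₂ Φ] at h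
    exact h
  -- orthonormality
  set V : Matrix (Fin K) (Fin K) ℝ := Matrix.of fun b i => whitenedVec Φ W c₂ i b with hV
  have hVVt : V * Vᵀ = 1 := by
    ext p q
    simp only [hV, Matrix.mul_apply, Matrix.transpose_apply, Matrix.of_apply,
      Matrix.one_apply, whitenedVec]
    rw [← hWent p q]
    exact Finset.sum_congr rfl fun i _ => by
      rw [mul_mul_mul_comm, Real.mul_self_sqrt (hc₂ i).le, mul_assoc]
  have hVtV : Vᵀ * V = 1 := mul_eq_one_comm.mp hVVt
  have part1 : ∀ i j : Fin K,
      ∑ b, whitenedVec Φ W c₂ i b * whitenedVec Φ W c₂ j b = if i = j then 1 else 0 := by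
    intro i j
    have h := congrFun (congrFun hVtV i) j
    simp only [hV, Matrix.mul_apply, Matrix.transpose_apply, Matrix.of_apply,
      Matrix.one_apply] at h
    exact h
  refine ⟨part1, ?_, ?_⟩
  · -- part 2
    intro p q r
    rw [helper3 (fun a => W a p) (fun b => W b q) (fun c => W c r) c₃ Φ]
    refine Finset.sum_congr rfl fun i _ => ?_
    have key : (c₂ i) ^ (-(3 : ℝ) / 2)
        * (Real.sqrt (c₂ i) * Real.sqrt (c₂ i) * Real.sqrt (c₂ i)) = 1 := by
      rw [Real.sqrt_eq_rpow, ← Real.rpow_add (hc₂ i), ← Real.rpow_add (hc₂ i),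
        ← Real.rpow_add (hc₂ i)]
      norm_num
    simp only [whitenedVec]
    linear_combination (-(c₃ i * m i p * m i q * m i r)) * key
  · -- part 3
    intro i
    -- W has full column rank
    have hGdet : IsUnit (Wᵀ * W).det := by
      rw [isUnit_iff_ne_zero]
      intro hdet
      obtain ⟨x, hxne, hx0⟩ := (Matrix.exists_mulVec_eq_zero_iff).mpr hdet
      have hWx : W *ᵥ x = 0 := by
        have h1 : (W *ᵥ x) ⬝ᵥ (W *ᵥ x) = 0 := by
          have : x ⬝ᵥ ((Wᵀ * W) *ᵥ x) = 0 := by rw [hx0, dotProduct_zero]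
          rwa [← Matrix.mulVec_mulVec, Matrix.dotProduct_mulVec,
            Matrix.vecMul_transpose] at this
        exact (dotProduct_self_eq_zero).mp h1
      have hx1 : x = 0 := by
        have h2 : (1 : Matrix (Fin K) (Fin K) ℝ) *ᵥ x = 0 := by
          rw [← hW, ← Matrix.mulVec_mulVec, ← Matrix.mulVec_mulVec, hWx,
            Matrix.mulVec_zero, Matrix.mulVec_zero]
        rwa [Matrix.one_mulVec] at h2
      exact hxne hx1
    have hGinv : (Wᵀ * W)⁻¹ * (Wᵀ * W) = 1 := Matrix.nonsing_inv_mul _ hGdet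
    -- φᵢ lies in the column span of W
    have hmem : (fun a => Φ a i) ∈
        Submodule.span ℝ (Set.range fun j : Fin K => fun a : Fin d => W a j) := by
      rw [hspan]
      exact Submodule.subset_span ⟨i, rfl⟩
    obtain ⟨x, hx⟩ := (Submodule.mem_span_range_iff_exists_fun ℝ).mp hmem
    have hφ : (fun a => Φ a i) = W *ᵥ x := by
      rw [← hx]
      funext a
      simp only [Finset.sum_apply, Pi.smul_apply, smul_eq_mul, Matrix.mulVec,
        dotProduct]
      exact Finset.sum_congr rfl fun j _ => mul_comm _ _
    have hvx : whitenedVec Φ W c₂ i = Real.sqrt (c₂ i) • (Wᵀ *ᵥ (W *ᵥ x)) := by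
      funext b
      simp only [whitenedVec, Pi.smul_apply, smul_eq_mul]
      congr 1
      have hφa : ∀ a, Φ a i = (W *ᵥ x) a := fun a => congrFun hφ a
      simp only [hφa, Matrix.mulVec, dotProduct, Matrix.transpose_apply]
    have hM : ((Wᵀ * W)⁻¹ * Wᵀ)ᵀ = W * (Wᵀ * W)⁻¹ := by
      rw [Matrix.transpose_mul, Matrix.transpose_transpose, Matrix.transpose_nonsing_inv,
        Matrix.transpose_mul, Matrix.transpose_transpose]
    have hMW : (W * (Wᵀ * W)⁻¹) *ᵥ (Wᵀ *ᵥ (W *ᵥ x)) = W *ᵥ x := by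
      rw [Matrix.mulVec_mulVec, Matrix.mulVec_mulVec, Matrix.mul_assoc,
        Matrix.mul_assoc, hGinv, Matrix.mul_one]
    have key1 : (c₂ i) ^ (-(1 : ℝ) / 2) * Real.sqrt (c₂ i) = 1 := by
      rw [Real.sqrt_eq_rpow, ← Real.rpow_add (hc₂ i)]
      norm_num
    funext a
    rw [hM, hvx, Matrix.mulVec_smul, hMW]
    simp only [Pi.smul_apply, smul_eq_mul]
    rw [← mul_assoc, key1, one_mul]
    exact congrFun hφ a
end
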